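/- arXiv:1412.2226 — 3 statements merged into one kernel-verified Lean document; each statement's English description precedes it below -/
import Mathlib

section
/- An allocation M of all items to the agents is the outcome of some policy (an arbitrary sequence of m turns) if and only if M is Pareto optimal. -/
open Finset
open scoped Classical

/-- The most preferred item of a nonempty finset w.r.t. a linear order
(greater means more preferred). -/
noncomputable def favorite {ι : Type} (L : LinearOrder ι) (S : Finset ι) (h : S.Nonempty) : ι :=
  @Finset.max' ι L S h

/-- Sequential allocation: process the turns in order; at each turn the agent whose
turn it is picks her most preferred item among the items not yet allocated.
Returns the list of (agent, item) picks, in order. -/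
noncomputable def seqAlloc {n : ℕ} {ι : Type} [DecidableEq ι]
    (P : Fin n → LinearOrder ι) : List (Fin n) → Finset ι → List (Fin n × ι)
  | [], _ => []
  | a :: rest, S =>
    if h : S.Nonempty then
      (a, favorite (P a) S h) :: seqAlloc P rest (S.erase (favorite (P a) S h))
    else []

/-- `M` is the outcome of the policy `π`: every item is picked by the agent that
`M` assigns it to. -/
def IsOutcome {n : ℕ} {ι : Type} [Fintype ι] [DecidableEq ι]
    (P : Fin n → LinearOrder ι) (π : List (Fin n)) (M : ι → Fin n) : Prop :=
  ∀ o : ι, (M o, o) ∈ seqAlloc P π Finset.univ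

/-- The set of items that agent `a` picks under the policy `π`. -/
noncomputable def receives {n : ℕ} {ι : Type} [Fintype ι] [DecidableEq ι]
    (P : Fin n → LinearOrder ι) (π : List (Fin n)) (a : Fin n) : Finset ι :=
  Finset.univ.filter (fun o => (a, o) ∈ seqAlloc P π Finset.univ)

/-- An allocation `M` is Pareto optimal if there is no bijection `f` of the items such
that every agent weakly prefers `f o` to `o` for each item `o` she gets, with at least
one strict preference. -/
def ParetoOptimal {n : ℕ} {ι : Type} (P : Fin n → LinearOrder ι) (M : ι → Fin n) : Prop :=
  ¬ ∃ f : ι ≃ ι, (∀ o : ι, (P (M o)).le o (f o)) ∧ (∃ o : ι, (P (M o)).lt o (f o))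

/-- A policy is balanced if every agent has exactly `k` turns. -/
def BalancedPolicy {n : ℕ} (k : ℕ) (π : List (Fin n)) : Prop :=
  ∀ a : Fin n, π.count a = k

/-- An allocation is balanced if every agent receives exactly `k` items. -/
def BalancedAlloc {n : ℕ} {ι : Type} [Fintype ι] (k : ℕ) (M : ι → Fin n) : Prop :=
  ∀ a : Fin n, (Finset.univ.filter (fun o => M o = a)).card = k

/-- A policy is recursively balanced if it splits into `k` consecutive rounds of `n`
turns each, every agent having exactly one turn in each round. -/
def RecBalanced (n k : ℕ) (π : List (Fin n)) : Prop :=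
  ∃ rounds : List (List (Fin n)), rounds.length = k ∧
    (∀ r ∈ rounds, r.length = n ∧ ∀ a : Fin n, r.count a = 1) ∧
    π = rounds.flatten

/-- A strict alternation policy: every one of the `k` rounds uses the same order `σ`
over the agents. -/
def StrictAlt (n k : ℕ) (π : List (Fin n)) : Prop :=
  ∃ σ : List (Fin n), σ.length = n ∧ (∀ a : Fin n, σ.count a = 1) ∧
    π = (List.replicate k σ).flatten

/-- A balanced alternation policy: odd-numbered rounds use the order `σ` over the agents
and even-numbered rounds use its reverse. -/
def BalAlt (n k : ℕ) (π : List (Fin n)) : Prop :=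
  ∃ σ : List (Fin n), σ.length = n ∧ (∀ a : Fin n, σ.count a = 1) ∧
    π = ((List.range k).map (fun r => if r % 2 = 0 then σ else σ.reverse)).flatten

/-- `p j i` (for `1 ≤ i ≤ k`) is the item ranked `i`-th by agent `j` among the items `M`
allocates to `j`: it is allocated to `j`, and exactly `i - 1` of the items allocated
to `j` are strictly preferred to it by agent `j`. -/
def IsRankingOf {n : ℕ} {ι : Type} [Fintype ι] (P : Fin n → LinearOrder ι) (k : ℕ)
    (M : ι → Fin n) (p : Fin n → ℕ → ι) : Prop :=
  ∀ (j : Fin n) (i : ℕ), 1 ≤ i → i ≤ k →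
    M (p j i) = j ∧
    (Finset.univ.filter (fun o => M o = j ∧ (P j).lt (p j i) o)).card = i - 1

/-- Condition 3: for all `1 ≤ t < s ≤ k` and all agents `j, j'`, agent `j` strictly
prefers `p j t` to `p j' s`. -/
def Cond3 {n : ℕ} {ι : Type} (P : Fin n → LinearOrder ι) (k : ℕ) (p : Fin n → ℕ → ι) : Prop :=
  ∀ t s : ℕ, 1 ≤ t → t < s → s ≤ k → ∀ j j' : Fin n, (P j).lt (p j' s) (p j t)

/-- The edge relation of the directed graph `G_M`: for odd `i ≤ k` an edge `a → b`
whenever `b` strictly prefers `p a i` to `p b i`, and for even `i ≤ k` an edge `a → b`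
whenever `a` strictly prefers `p b i` to `p a i`. -/
def GM {n : ℕ} {ι : Type} (P : Fin n → LinearOrder ι) (k : ℕ) (p : Fin n → ℕ → ι)
    (a b : Fin n) : Prop :=
  (∃ i : ℕ, 1 ≤ i ∧ i ≤ k ∧ i % 2 = 1 ∧ (P b).lt (p b i) (p a i)) ∨
  (∃ i : ℕ, 1 ≤ i ∧ i ≤ k ∧ i % 2 = 0 ∧ (P a).lt (p a i) (p b i))

/-- The edge relation of the directed graph `H_M`: for each `i ≤ k` an edge `a → b`
whenever `b` strictly prefers `p a i` to `p b i`. -/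
def HM {n : ℕ} {ι : Type} (P : Fin n → LinearOrder ι) (k : ℕ) (p : Fin n → ℕ → ι)
    (a b : Fin n) : Prop :=
  ∃ i : ℕ, 1 ≤ i ∧ i ≤ k ∧ (P b).lt (p b i) (p a i)

/-- The `k` most preferred items of agent `j`: those items with fewer than `k` items
strictly preferred to them by `j`. -/
noncomputable def topItems {n : ℕ} {ι : Type} [Fintype ι] (P : Fin n → LinearOrder ι)
    (k : ℕ) (j : Fin n) : Finset ι :=
  Finset.univ.filter (fun o => (Finset.univ.filter (fun o' => (P j).lt o o')).card < k)

/-- The rank of item `o` in agent `j`'s preference (the most preferred item has rank 1). -/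
noncomputable def rankOf {n : ℕ} {ι : Type} [Fintype ι] (P : Fin n → LinearOrder ι)
    (j : Fin n) (o : ι) : ℕ :=
  (Finset.univ.filter (fun o' => (P j).lt o o')).card + 1
/-- Auxiliary: every item picked by `seqAlloc` from `S` lies in `S`. -/
lemma seqAlloc_snd_mem {n : ℕ} {ι : Type} [DecidableEq ι]
    (P : Fin n → LinearOrder ι) :
    ∀ (π : List (Fin n)) (S : Finset ι) (a : Fin n) (o : ι),
      (a, o) ∈ seqAlloc P π S → o ∈ S := by
  intro π
  induction π with
  | nil => intro S a o h; simp [seqAlloc] at h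
  | cons b rest ih =>
    intro S a o h
    rw [seqAlloc] at h
    split_ifs at h with hS
    · rcases List.mem_cons.mp h with h1 | h2
      · have : o = favorite (P b) S hS := (Prod.ext_iff.mp h1).2
        rw [this]
        exact @Finset.max'_mem ι (P b) S hS
      · exact Finset.mem_of_mem_erase (ih _ _ _ h2)
    · simp at h

/-- Auxiliary Pareto optimality restricted to a support set. -/
def POon {n : ℕ} {ι : Type} (P : Fin n → LinearOrder ι) (M : ι → Fin n) (S : Finset ι) : Prop :=
  ¬ ∃ f : ι ≃ ι, (∀ o ∉ S, f o = o) ∧ (∀ o : ι, (P (M o)).le o (f o)) ∧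
      ∃ o : ι, (P (M o)).lt o (f o)

/-- If `M` is Pareto optimal on `S`, some item of `S` is the favorite of its owner. -/
lemma exists_self_fav {n : ℕ} {ι : Type} [Fintype ι] [DecidableEq ι]
    (P : Fin n → LinearOrder ι) (M : ι → Fin n) (S : Finset ι) (hS : S.Nonempty)
    (hpo : POon P M S) :
    ∃ o ∈ S, @Finset.max' ι (P (M o)) S hS = o := by
  by_contra hcon
  push_neg at hcon
  set T : ι → ι := fun o => if o ∈ S then @Finset.max' ι (P (M o)) S hS else o with hT
  have hTS : ∀ o ∈ S, T o ∈ S := by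
    intro o ho
    simp only [hT, if_pos ho]
    exact @Finset.max'_mem ι (P (M o)) S hS
  have hTlt : ∀ o ∈ S, (P (M o)).lt o (T o) := by
    intro o ho
    letI : LinearOrder ι := P (M o)
    have h1 : o ≤ S.max' hS := Finset.le_max' S o ho
    have h2 : S.max' hS ≠ o := hcon o ho
    have : T o = S.max' hS := by simp only [hT, if_pos ho]
    rw [this]
    exact lt_of_le_of_ne h1 (Ne.symm h2)
  have hiter : ∀ z ∈ S, ∀ t : ℕ, T^[t] z ∈ S := by
    intro z hz t
    induction t with
    | zero => simpa
    | succ t iht => rw [Function.iterate_succ_apply']; exact hTS _ iht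
  obtain ⟨x, hx⟩ := hS
  obtain ⟨i, j, hij, heq⟩ := Finite.exists_ne_map_eq_of_infinite (fun t : ℕ => T^[t] x)
  wlog hlt : i < j generalizing i j
  · exact this j i hij.symm heq.symm (by omega)
  set y := T^[i] x with hy
  set r := j - i with hr
  have hr1 : 1 ≤ r := by omega
  have hTy : T^[r] y = y := by
    rw [hy, ← Function.iterate_add_apply]
    have : r + i = j := by omega
    rw [this]
    exact heq.symm
  set O : Set ι := Set.range (fun t : ℕ => T^[t] y) with hO
  have hyS : y ∈ S := hiter x hx i
  have hOS : ∀ o ∈ O, o ∈ S := by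
    rintro o ⟨t, rfl⟩; exact hiter y hyS t
  have hOT : ∀ o ∈ O, T o ∈ O := by
    rintro o ⟨t, rfl⟩
    refine ⟨t + 1, ?_⟩
    exact Function.iterate_succ_apply' T t y
  have hOsurj : ∀ o ∈ O, ∃ o' ∈ O, T o' = o := by
    rintro o ⟨t, rfl⟩
    refine ⟨T^[t + r - 1] y, ⟨t + r - 1, rfl⟩, ?_⟩
    have h1 : T (T^[t + r - 1] y) = T^[t + r] y := by
      have h2 := Function.iterate_succ_apply' T (t + r - 1) y
      rw [show (t + r - 1).succ = t + r from by omega] at h2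
      exact h2.symm
    rw [h1, Function.iterate_add_apply, hTy]
  set g : ι → ι := fun o => if o ∈ O then T o else o with hg
  have hginj : Function.Injective g := by
    have e : O → O := fun o => ⟨T o.1, hOT o.1 o.2⟩
    have hesurj : Function.Surjective (fun o : O => (⟨T o.1, hOT o.1 o.2⟩ : O)) := by
      rintro ⟨o, ho⟩
      obtain ⟨o', ho', heq'⟩ := hOsurj o ho
      exact ⟨⟨o', ho'⟩, Subtype.ext heq'⟩
    have heinj := Finite.injective_iff_surjective.mpr hesurj
    intro a b hab
    by_cases ha : a ∈ O <;> by_cases hb : b ∈ O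
    · simp only [hg, if_pos ha, if_pos hb] at hab
      have h3 : (⟨a, ha⟩ : O) = ⟨b, hb⟩ := heinj (by exact Subtype.ext hab)
      exact congrArg Subtype.val h3
    · simp only [hg, if_pos ha, if_neg hb] at hab
      exact absurd (hab ▸ hOT a ha) hb
    · simp only [hg, if_neg ha, if_pos hb] at hab
      exact absurd (hab ▸ hOT b hb) ha
    · simpa only [hg, if_neg ha, if_neg hb] using hab
  set f : ι ≃ ι := Equiv.ofBijective g (Finite.injective_iff_bijective.mp hginj) with hf
  have hfapp : ∀ o, f o = g o := fun o => rfl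
  refine hpo ⟨f, ?_, ?_, ?_⟩
  · intro o ho
    rw [hfapp, hg]
    simp only [if_neg (fun h => ho (hOS o h))]
  · intro o
    rw [hfapp, hg]
    by_cases ho : o ∈ O
    · simp only [if_pos ho]
      letI : LinearOrder ι := P (M o)
      exact le_of_lt (hTlt o (hOS o ho))
    · simp only [if_neg ho]
      letI : LinearOrder ι := P (M o)
      exact le_refl o
  · refine ⟨y, ?_⟩
    have hyO : y ∈ O := ⟨0, rfl⟩
    rw [hfapp, hg]
    simp only [if_pos hyO]
    exact hTlt y hyS

/-- Construction: Pareto optimality on `S` yields a greedy policy for `S`. -/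
lemma exists_policy_on {n : ℕ} {ι : Type} [Fintype ι] [DecidableEq ι]
    (P : Fin n → LinearOrder ι) (M : ι → Fin n) :
    ∀ (m : ℕ) (S : Finset ι), S.card = m → POon P M S →
      ∃ π : List (Fin n), π.length = m ∧ ∀ o ∈ S, (M o, o) ∈ seqAlloc P π S := by
  intro m
  induction m with
  | zero =>
    intro S hcard _
    refine ⟨[], rfl, ?_⟩
    intro o ho
    rw [Finset.card_eq_zero] at hcard
    simp [hcard] at ho
  | succ m ih =>
    intro S hcard hpo
    have hS : S.Nonempty := Finset.card_pos.mp (by omega)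
    obtain ⟨o₀, ho₀, hfav⟩ := exists_self_fav P M S hS hpo
    have hpo' : POon P M (S.erase o₀) := by
      rintro ⟨f, h1, h2, h3⟩
      exact hpo ⟨f, fun o ho => h1 o (fun h => ho (Finset.mem_of_mem_erase h)), h2, h3⟩
    have hcard' : (S.erase o₀).card = m := by
      rw [Finset.card_erase_of_mem ho₀, hcard]; omega
    obtain ⟨π', hlen, hmem⟩ := ih (S.erase o₀) hcard' hpo'
    refine ⟨M o₀ :: π', by simp [hlen], ?_⟩
    have hfav' : favorite (P (M o₀)) S hS = o₀ := hfav
    have hL : seqAlloc P (M o₀ :: π') S =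
        (M o₀, o₀) :: seqAlloc P π' (S.erase o₀) := by
      rw [seqAlloc, dif_pos hS, hfav']
    intro o ho
    rw [hL]
    by_cases h : o = o₀
    · subst h; exact List.mem_cons_self
    · exact List.mem_cons_of_mem _ (hmem o (Finset.mem_erase.mpr ⟨h, ho⟩))

/-- Forward direction: any Pareto improvement of an outcome is the identity. -/
lemma outcome_fix {n : ℕ} {ι : Type} [Fintype ι] [DecidableEq ι]
    (P : Fin n → LinearOrder ι) (M : ι → Fin n) (f : ι ≃ ι)
    (hle : ∀ o : ι, (P (M o)).le o (f o)) :
    ∀ (π : List (Fin n)) (S : Finset ι),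
      (∀ o ∈ S, (M o, o) ∈ seqAlloc P π S) → (∀ o, o ∉ S → f o = o) →
      ∀ o ∈ S, f o = o := by
  intro π
  induction π with
  | nil =>
    intro S hmem _ o ho
    exact absurd (hmem o ho) (by simp [seqAlloc])
  | cons a rest ih =>
    intro S hmem hfix o ho
    have hS : S.Nonempty := ⟨o, ho⟩
    set v := favorite (P a) S hS with hv
    have hvS : v ∈ S := @Finset.max'_mem ι (P a) S hS
    have hL : seqAlloc P (a :: rest) S = (a, v) :: seqAlloc P rest (S.erase v) := by
      rw [seqAlloc, dif_pos hS]
    have hfS : ∀ s ∈ S, f s ∈ S := by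
      intro s hs
      by_contra h
      have h2 : f s = s := f.injective (hfix (f s) h)
      rw [h2] at h
      exact h hs
    have hMv : M v = a := by
      have h1 := hmem v hvS
      rw [hL] at h1
      rcases List.mem_cons.mp h1 with h2 | h2
      · exact (Prod.ext_iff.mp h2).1
      · exact absurd (seqAlloc_snd_mem P rest (S.erase v) (M v) v h2)
          (Finset.notMem_erase v S)
    have hfv : f v = v := by
      letI : LinearOrder ι := P a
      have h1 : f v ≤ v := Finset.le_max' S (f v) (hfS v hvS)
      have h2 : v ≤ f v := by have := hle v; rwa [hMv] at this
      exact le_antisymm h1 h2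
    by_cases hov : o = v
    · rw [hov]; exact hfv
    · refine ih (S.erase v) ?_ ?_ o (Finset.mem_erase.mpr ⟨hov, ho⟩)
      · intro o' ho'
        have h1 := hmem o' (Finset.mem_of_mem_erase ho')
        rw [hL] at h1
        rcases List.mem_cons.mp h1 with h2 | h2
        · exact absurd ((Prod.ext_iff.mp h2).2) (Finset.mem_erase.mp ho').1
        · exact h2
      · intro o' ho'
        by_cases h : o' ∈ S
        · have : o' = v := by
            by_contra hne
            exact ho' (Finset.mem_erase.mpr ⟨hne, h⟩)
          rw [this]; exact hfv
        · exact hfix o' h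

/-- An allocation `M` of all items to the agents is the outcome of some
policy (an arbitrary sequence of `m = k * n` turns) if and only if `M` is Pareto optimal. -/
theorem possible_assignment_arbitrary
    {ι : Type} [Fintype ι] [DecidableEq ι] {n k : ℕ} (hn : 0 < n) (hk : 1 ≤ k)
    (hcard : Fintype.card ι = k * n)
    (P : Fin n → LinearOrder ι) (M : ι → Fin n) :
    (∃ π : List (Fin n), π.length = k * n ∧ IsOutcome P π M) ↔ ParetoOptimal P M := by
  constructor
  · rintro ⟨π, hlen, hout⟩ ⟨f, hle, o, hlt⟩
    have hfix : f o = o :=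
      outcome_fix P M f hle π Finset.univ (fun o _ => hout o)
        (fun o h => absurd (Finset.mem_univ o) h) o (Finset.mem_univ o)
    rw [hfix] at hlt
    letI : LinearOrder ι := P (M o)
    exact lt_irrefl o hlt
  · intro hpo
    have hPO : POon P M Finset.univ := by
      rintro ⟨f, _, h2, h3⟩
      exact hpo ⟨f, h2, h3⟩
    obtain ⟨π, hlen, hmem⟩ := exists_policy_on P M Finset.univ.card Finset.univ rfl hPO
    exact ⟨π, by rw [hlen, Finset.card_univ, hcard], fun o => hmem o (Finset.mem_univ o)⟩
end

section
/- An allocation M is the outcome of some balanced policy if and only if M is Pareto optimal and balanced. -/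
open Finset
open scoped Classical

section Aux

lemma favorite_mem {ι : Type} (L : LinearOrder ι) (S : Finset ι) (h : S.Nonempty) :
    favorite L S h ∈ S := by
  letI := L; exact S.max'_mem h

lemma le_favorite {ι : Type} (L : LinearOrder ι) (S : Finset ι) (h : S.Nonempty)
    {o : ι} (ho : o ∈ S) : L.le o (favorite L S h) := by
  letI := L; exact S.le_max' o ho

lemma favorite_eq {ι : Type} (L : LinearOrder ι) (S : Finset ι) (h : S.Nonempty)
    {x : ι} (hx : x ∈ S) (hmax : ∀ o ∈ S, L.le o x) : favorite L S h = x := by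
  letI := L; exact le_antisymm (S.max'_le h x hmax) (S.le_max' x hx)

lemma seqAlloc_nil {n : ℕ} {ι : Type} [DecidableEq ι] (P : Fin n → LinearOrder ι)
    (S : Finset ι) : seqAlloc P [] S = [] := by
  rw [seqAlloc]

lemma seqAlloc_cons {n : ℕ} {ι : Type} [DecidableEq ι] (P : Fin n → LinearOrder ι)
    (a : Fin n) (rest : List (Fin n)) (S : Finset ι) (h : S.Nonempty) :
    seqAlloc P (a :: rest) S =
      (a, favorite (P a) S h) :: seqAlloc P rest (S.erase (favorite (P a) S h)) := by
  rw [seqAlloc, dif_pos h]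

lemma seqAlloc_cons_empty {n : ℕ} {ι : Type} [DecidableEq ι] (P : Fin n → LinearOrder ι)
    (a : Fin n) (rest : List (Fin n)) (S : Finset ι) (h : ¬ S.Nonempty) :
    seqAlloc P (a :: rest) S = [] := by
  rw [seqAlloc, dif_neg h]

lemma snd_mem_of_mem_seqAlloc {n : ℕ} {ι : Type} [DecidableEq ι]
    (P : Fin n → LinearOrder ι) :
    ∀ (π : List (Fin n)) (S : Finset ι) {a : Fin n} {o : ι},
      (a, o) ∈ seqAlloc P π S → o ∈ S := by
  intro π
  induction π with
  | nil => intro S a o hm; rw [seqAlloc_nil] at hm; exact absurd hm List.not_mem_nil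
  | cons b rest ih =>
    intro S a o hm
    by_cases h : S.Nonempty
    · rw [seqAlloc_cons P b rest S h] at hm
      rcases List.mem_cons.mp hm with h1 | h2
      · have : o = favorite (P b) S h := congrArg Prod.snd h1
        rw [this]; exact favorite_mem _ _ _
      · exact Finset.mem_of_mem_erase (ih _ h2)
    · rw [seqAlloc_cons_empty P b rest S h] at hm
      exact absurd hm List.not_mem_nil

end Aux
section Aux2

variable {n : ℕ} {ι : Type} [Fintype ι] [DecidableEq ι]

lemma filter_fst_length_le (P : Fin n → LinearOrder ι) (a : Fin n) :
    ∀ (π : List (Fin n)) (S : Finset ι),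
      ((seqAlloc P π S).filter (fun q => q.1 = a)).length ≤ π.count a := by
  intro π
  induction π with
  | nil => intro S; rw [seqAlloc_nil]; simp
  | cons b rest ih =>
    intro S
    by_cases h : S.Nonempty
    · rw [seqAlloc_cons P b rest S h]
      by_cases hba : b = a
      · subst hba
        rw [List.filter_cons_of_pos (by simp), List.count_cons_self]
        simpa using ih _
      · rw [List.filter_cons_of_neg (by simp [hba]), List.count_cons_of_ne hba]
        exact ih _
    · rw [seqAlloc_cons_empty P b rest S h]
      simp

lemma sum_count_eq_length (l : List (Fin n)) : ∑ a, l.count a = l.length := by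
  induction l with
  | nil => simp
  | cons b t ih =>
    simp only [List.count_cons, List.length_cons, Finset.sum_add_distrib, ih]
    simp

lemma fiber_card_le_count (P : Fin n → LinearOrder ι) (π : List (Fin n)) (M : ι → Fin n)
    (hout : IsOutcome P π M) (a : Fin n) :
    (Finset.univ.filter (fun o => M o = a)).card ≤ π.count a := by
  have h1 : (Finset.univ.filter (fun o => M o = a)).card
      ≤ ((seqAlloc P π Finset.univ).filter (fun q => q.1 = a)).toFinset.card := by
    apply Finset.card_le_card_of_injOn (fun o => (a, o))
    · intro o ho
      rw [Finset.mem_coe, List.mem_toFinset, List.mem_filter]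
      have hMo : M o = a := (Finset.mem_filter.mp ho).2
      exact ⟨by rw [← hMo]; exact hout o, by simp⟩
    · intro x _ y _ hxy
      exact congrArg Prod.snd hxy
  calc (Finset.univ.filter (fun o => M o = a)).card
      ≤ ((seqAlloc P π Finset.univ).filter (fun q => q.1 = a)).toFinset.card := h1
    _ ≤ ((seqAlloc P π Finset.univ).filter (fun q => q.1 = a)).length :=
        List.toFinset_card_le _
    _ ≤ π.count a := filter_fst_length_le P a π Finset.univ

lemma fixed_of_outcome (P : Fin n → LinearOrder ι) (M : ι → Fin n) :
    ∀ (π : List (Fin n)) (S : Finset ι) (f : ι ≃ ι),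
      (∀ o ∈ S, (M o, o) ∈ seqAlloc P π S) → (∀ o ∈ S, f o ∈ S) →
      (∀ o : ι, (P (M o)).le o (f o)) → ∀ o ∈ S, f o = o := by
  intro π
  induction π with
  | nil =>
    intro S f hout _ _ o ho
    have := hout o ho
    rw [seqAlloc_nil] at this
    exact absurd this List.not_mem_nil
  | cons b rest ih =>
    intro S f hout hcl hle o ho
    have hS : S.Nonempty := ⟨o, ho⟩
    set x := favorite (P b) S hS with hxdef
    have hsa : seqAlloc P (b :: rest) S = (b, x) :: seqAlloc P rest (S.erase x) :=
      seqAlloc_cons P b rest S hS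
    have hxS : x ∈ S := favorite_mem _ _ _
    have hMx : M x = b := by
      have hmem := hout x hxS
      rw [hsa] at hmem
      rcases List.mem_cons.mp hmem with h1 | h2
      · exact congrArg Prod.fst h1
      · have := snd_mem_of_mem_seqAlloc P rest (S.erase x) h2
        exact absurd this (by simp)
    have hfx : f x = x := by
      have h1 : (P b).le x (f x) := by
        have := hle x
        rwa [hMx] at this
      have h2 : (P b).le (f x) x := le_favorite (P b) S hS (hcl x hxS)
      letI := P b
      exact le_antisymm h2 h1
    by_cases hox : o = x
    · rw [hox, hfx]
    · have ho' : o ∈ S.erase x := Finset.mem_erase.mpr ⟨hox, ho⟩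
      refine ih (S.erase x) f ?_ ?_ hle o ho'
      · intro o' ho''
        have hmem := hout o' (Finset.mem_of_mem_erase ho'')
        rw [hsa] at hmem
        rcases List.mem_cons.mp hmem with h1 | h2
        · exact absurd (congrArg Prod.snd h1) (Finset.ne_of_mem_erase ho'')
        · exact h2
      · intro o' ho''
        rcases Finset.mem_erase.mp ho'' with ⟨hne, hmem⟩
        refine Finset.mem_erase.mpr ⟨?_, hcl o' hmem⟩
        intro hfo
        exact hne (f.injective (hfo.trans hfx.symm))

lemma po_of_outcome (P : Fin n → LinearOrder ι) (π : List (Fin n)) (M : ι → Fin n)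
    (hout : IsOutcome P π M) : ParetoOptimal P M := by
  rintro ⟨f, hle, o, hlt⟩
  have hfix := fixed_of_outcome P M π Finset.univ f (fun o' _ => hout o')
    (fun o' _ => Finset.mem_univ _) hle o (Finset.mem_univ o)
  rw [hfix] at hlt
  letI := P (M o)
  exact lt_irrefl o hlt

end Aux2
section Aux3

set_option linter.unusedSectionVars false

variable {n : ℕ} {ι : Type} [Fintype ι] [DecidableEq ι]

lemma exists_top (P : Fin n → LinearOrder ι) (M : ι → Fin n) (hPO : ParetoOptimal P M)
    (S : Finset ι) (hS : S.Nonempty) :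
    ∃ x ∈ S, ∀ o ∈ S, (P (M x)).le o x := by
  by_contra hcon
  push_neg at hcon
  set g : ι → ι := fun o => favorite (P (M o)) S hS with hgdef
  have hgS : ∀ o : ι, g o ∈ S := fun o => favorite_mem _ _ _
  have hlt : ∀ o ∈ S, (P (M o)).lt o (g o) := by
    intro o ho
    obtain ⟨o', ho', hno⟩ := hcon o ho
    letI := P (M o)
    have h1 : o < o' := hno
    exact lt_of_lt_of_le h1 (le_favorite (P (M o)) S hS ho')
  obtain ⟨a₀, ha₀⟩ := hS
  have hiter : ∀ t : ℕ, g^[t] a₀ ∈ S := by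
    intro t
    induction t with
    | zero => exact ha₀
    | succ t iht => rw [Function.iterate_succ_apply']; exact hgS _
  -- pigeonhole: find a periodic point
  obtain ⟨i, j, hij, heq⟩ :=
    Fintype.exists_ne_map_eq_of_card_lt
      (fun t : Fin (S.card + 1) => (⟨g^[(t : ℕ)] a₀, hiter t⟩ : {x // x ∈ S}))
      (by simp [Fintype.card_coe])
  wlog hlt' : (i : ℕ) < (j : ℕ) generalizing i j
  · refine this j i hij.symm heq.symm ?_
    have hne : (j : ℕ) ≠ (i : ℕ) := fun h => hij (Fin.ext h.symm)
    omega
  have heq' : g^[(i : ℕ)] a₀ = g^[(j : ℕ)] a₀ := congrArg Subtype.val heq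
  set y := g^[(i : ℕ)] a₀ with hydef
  set m := (j : ℕ) - (i : ℕ) with hmdef
  have hm : 0 < m := by omega
  have hcy : g^[m] y = y := by
    rw [hydef, ← Function.iterate_add_apply]
    have : m + (i : ℕ) = (j : ℕ) := by omega
    rw [this, ← heq']
  have hiter_y : ∀ t : ℕ, g^[t] y ∈ S := by
    intro t
    rw [hydef, ← Function.iterate_add_apply]
    exact hiter _
  set C : Finset ι := (Finset.range m).image (fun t => g^[t] y) with hCdef
  have hCS : ∀ c ∈ C, c ∈ S := by
    intro c hc
    obtain ⟨t, _, rfl⟩ := Finset.mem_image.mp hc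
    exact hiter_y t
  have hmap : ∀ c ∈ C, g c ∈ C := by
    intro c hc
    obtain ⟨t, ht, rfl⟩ := Finset.mem_image.mp hc
    rw [← Function.iterate_succ_apply' g t y, Nat.succ_eq_add_one]
    by_cases h : t + 1 = m
    · rw [h, hcy]
      exact Finset.mem_image.mpr ⟨0, Finset.mem_range.mpr hm, rfl⟩
    · exact Finset.mem_image_of_mem _
        (Finset.mem_range.mpr (lt_of_le_of_ne (Finset.mem_range.mp ht) h))
  have hsurj : C ⊆ C.image g := by
    intro c hc
    obtain ⟨t, ht, rfl⟩ := Finset.mem_image.mp hc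
    cases t with
    | zero =>
      refine Finset.mem_image.mpr ⟨g^[m-1] y, ?_, ?_⟩
      · exact Finset.mem_image_of_mem _ (Finset.mem_range.mpr (by omega))
      · rw [← Function.iterate_succ_apply' g (m-1) y, Nat.succ_eq_add_one]
        have h2 : m - 1 + 1 = m := by omega
        rw [h2, hcy]
        rfl
    | succ t' =>
      refine Finset.mem_image.mpr ⟨g^[t'] y, ?_, ?_⟩
      · exact Finset.mem_image_of_mem _ (Finset.mem_range.mpr (by
          have := Finset.mem_range.mp ht; omega))
      · rw [← Function.iterate_succ_apply' g t' y, Nat.succ_eq_add_one]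
  have hinj : Set.InjOn g (C : Set ι) := by
    apply Finset.injOn_of_card_image_eq
    have : C.image g = C :=
      Finset.Subset.antisymm (Finset.image_subset_iff.mpr hmap) hsurj
    rw [this]
  set F : ι → ι := fun o => if o ∈ C then g o else o with hFdef
  have hFinj : Function.Injective F := by
    intro u v huv
    by_cases hu : u ∈ C <;> by_cases hv : v ∈ C <;> simp only [hFdef, if_pos, if_neg, hu, hv, if_true, if_false] at huv
    · exact hinj hu hv huv
    · exact absurd (huv ▸ hmap u hu) hv
    · exact absurd (huv ▸ hmap v hv) hu
    · exact huv
  have hFbij : Function.Bijective F := Finite.injective_iff_bijective.mp hFinj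
  apply hPO
  refine ⟨Equiv.ofBijective F hFbij, ?_, ?_⟩
  · intro o
    show (P (M o)).le o (F o)
    by_cases ho : o ∈ C
    · have : F o = g o := if_pos ho
      rw [this]
      letI := P (M o)
      exact le_of_lt (hlt o (hCS o ho))
    · have : F o = o := if_neg ho
      rw [this]
      letI := P (M o)
      exact le_refl o
  · refine ⟨y, ?_⟩
    have hyC : y ∈ C := Finset.mem_image.mpr ⟨0, Finset.mem_range.mpr hm, rfl⟩
    show (P (M y)).lt y (Equiv.ofBijective F hFbij y)
    have : Equiv.ofBijective F hFbij y = g y := by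
      show F y = g y
      exact if_pos hyC
    rw [this]
    exact hlt y (hCS y hyC)

end Aux3
section Aux4

set_option linter.unusedSectionVars false

variable {n : ℕ} {ι : Type} [Fintype ι] [DecidableEq ι]

lemma exists_policy (P : Fin n → LinearOrder ι) (M : ι → Fin n)
    (hPO : ParetoOptimal P M) :
    ∀ (N : ℕ) (S : Finset ι), S.card ≤ N →
      ∃ π : List (Fin n), π.length = S.card ∧ ∀ o ∈ S, (M o, o) ∈ seqAlloc P π S := by
  intro N
  induction N with
  | zero =>
    intro S hle
    have hS : S = ∅ := Finset.card_eq_zero.mp (Nat.le_zero.mp hle)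
    subst hS
    exact ⟨[], by simp, by simp⟩
  | succ N ih =>
    intro S hle
    rcases S.eq_empty_or_nonempty with rfl | hS
    · exact ⟨[], by simp, by simp⟩
    obtain ⟨x, hx, hmax⟩ := exists_top P M hPO S hS
    have hcard_erase : (S.erase x).card = S.card - 1 := Finset.card_erase_of_mem hx
    have hpos : 1 ≤ S.card := Finset.card_pos.mpr hS
    obtain ⟨π', hlen, hmem⟩ := ih (S.erase x) (by omega)
    refine ⟨M x :: π', by simp [hlen, hcard_erase]; omega, ?_⟩
    intro o ho
    have hfav : favorite (P (M x)) S hS = x := favorite_eq _ _ _ hx hmax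
    rw [seqAlloc_cons P (M x) π' S hS, hfav]
    by_cases h : o = x
    · subst h
      exact List.mem_cons_self
    · exact List.mem_cons.mpr (Or.inr (hmem o (Finset.mem_erase.mpr ⟨h, ho⟩)))

end Aux4
/-- An allocation `M` is the outcome of some balanced policy if and only if
`M` is Pareto optimal and balanced. -/
theorem possible_assignment_balanced
    {ι : Type} [Fintype ι] [DecidableEq ι] {n k : ℕ} (hn : 0 < n) (hk : 1 ≤ k)
    (hcard : Fintype.card ι = k * n)
    (P : Fin n → LinearOrder ι) (M : ι → Fin n) :
    (∃ π : List (Fin n), BalancedPolicy k π ∧ IsOutcome P π M) ↔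
      ParetoOptimal P M ∧ BalancedAlloc k M := by
  constructor
  · rintro ⟨π, hbal, hout⟩
    refine ⟨po_of_outcome P π M hout, ?_⟩
    have hfibsum : ∑ a : Fin n, (Finset.univ.filter (fun o => M o = a)).card = k * n := by
      rw [← Finset.card_eq_sum_card_fiberwise (fun o _ => Finset.mem_univ (M o)),
        Finset.card_univ, hcard]
    have hfible : ∀ a : Fin n, (Finset.univ.filter (fun o => M o = a)).card ≤ k :=
      fun a => (fiber_card_le_count P π M hout a).trans_eq (hbal a)
    have hsumeq : ∑ a : Fin n, (Finset.univ.filter (fun o => M o = a)).card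
        = ∑ _a : Fin n, k := by
      rw [hfibsum]
      simp [Finset.sum_const, Finset.card_univ, mul_comm]
    intro a
    exact (Finset.sum_eq_sum_iff_of_le (fun i _ => hfible i)).mp hsumeq a (Finset.mem_univ a)
  · rintro ⟨hPO, hbal⟩
    obtain ⟨π, hlen, hmem⟩ := exists_policy P M hPO (Finset.univ.card) Finset.univ le_rfl
    have hout : IsOutcome P π M := fun o => hmem o (Finset.mem_univ o)
    refine ⟨π, ?_, hout⟩
    have h1 : ∀ a : Fin n, k ≤ π.count a := by
      intro a
      have := fiber_card_le_count P π M hout a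
      rwa [hbal a] at this
    have h2 : ∑ a : Fin n, π.count a = ∑ _a : Fin n, k := by
      rw [sum_count_eq_length, hlen, Finset.card_univ, hcard]
      simp [Finset.sum_const, Finset.card_univ, mul_comm]
    intro a
    exact ((Finset.sum_eq_sum_iff_of_le (fun i _ => h1 i)).mp h2.symm a
      (Finset.mem_univ a)).symm
end

section
/- An allocation M is the outcome of some strict alternation policy if and only if M is Pareto optimal, M is balanced, M satisfies Condition 3, and the directed graph H_M contains no cycle. -/
open Finset
open scoped Classical

section Infra
set_option linter.unusedSectionVars false

variable {ι : Type} [DecidableEq ι]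

theorem seqAlloc_spec {n : ℕ} (P : Fin n → LinearOrder ι) :
    ∀ (π : List (Fin n)) (S : Finset ι), π.length ≤ S.card →
      (seqAlloc P π S).map Prod.fst = π ∧
      ((seqAlloc P π S).map Prod.snd).Nodup ∧
      (∀ x ∈ seqAlloc P π S, x.2 ∈ S) ∧
      (seqAlloc P π S).Pairwise (fun x y => (P x.1).lt y.2 x.2) := by
  intro π
  induction π with
  | nil => intro S _; simp [seqAlloc]
  | cons a rest ih =>
    intro S hlen
    have hS : S.Nonempty := Finset.card_pos.mp (by
      have : 0 < (a :: rest).length := by simp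
      omega)
    set fav := favorite (P a) S hS with hfav
    have hfavS : fav ∈ S := by
      letI := P a
      exact S.max'_mem hS
    have hlt : ∀ x ∈ S, x ≠ fav → (P a).lt x fav := by
      letI := P a
      intro x hx hne
      exact lt_of_le_of_ne (S.le_max' x hx) hne
    have hrec : seqAlloc P (a :: rest) S =
        (a, fav) :: seqAlloc P rest (S.erase fav) := by
      rw [seqAlloc, dif_pos hS]
    have hcard' : rest.length ≤ (S.erase fav).card := by
      rw [Finset.card_erase_of_mem hfavS]
      have : (a :: rest).length = rest.length + 1 := by simp
      omega
    obtain ⟨ih1, ih2, ih3, ih4⟩ := ih (S.erase fav) hcard'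
    have hmemtail : ∀ x ∈ seqAlloc P rest (S.erase fav), x.2 ∈ S ∧ x.2 ≠ fav := by
      intro x hx
      have := ih3 x hx
      exact ⟨Finset.mem_of_mem_erase this, Finset.ne_of_mem_erase this⟩
    rw [hrec]
    refine ⟨by simp [ih1], ?_, ?_, ?_⟩
    · simp only [List.map_cons, List.nodup_cons]
      refine ⟨?_, ih2⟩
      intro hmem
      obtain ⟨x, hx, hx2⟩ := List.mem_map.mp hmem
      exact (hmemtail x hx).2 hx2
    · intro x hx
      rcases List.mem_cons.mp hx with h | h
      · rw [h]; exact hfavS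
      · exact (hmemtail x h).1
    · refine List.pairwise_cons.mpr ⟨?_, ih4⟩
      intro y hy
      exact hlt y.2 (hmemtail y hy).1 (hmemtail y hy).2

theorem seqAlloc_eq {n : ℕ} (P : Fin n → LinearOrder ι) :
    ∀ (L : List (Fin n × ι)) (S : Finset ι),
      ((L.map Prod.snd)).Nodup → (L.map Prod.snd).toFinset = S →
      L.Pairwise (fun x y => (P x.1).lt y.2 x.2) →
      seqAlloc P (L.map Prod.fst) S = L := by
  intro L
  induction L with
  | nil => intro S _ hS _; simp [seqAlloc]
  | cons x L' ih =>
    intro S hnd hS hpw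
    obtain ⟨a, o⟩ := x
    have hoS : o ∈ S := by
      rw [← hS]; simp
    have hS' : S.Nonempty := ⟨o, hoS⟩
    have hpw' := List.pairwise_cons.mp hpw
    have hfav : favorite (P a) S hS' = o := by
      letI := P a
      refine le_antisymm (Finset.max'_le _ _ _ ?_) (Finset.le_max' _ _ hoS)
      intro y hy
      rw [← hS, List.mem_toFinset, List.map_cons, List.mem_cons] at hy
      rcases hy with h1 | h1
      · exact le_of_eq h1
      · obtain ⟨z, hz, hz2⟩ := List.mem_map.mp h1
        exact le_of_lt (by rw [← hz2]; exact hpw'.1 z hz)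
    have hnd0 : (o :: L'.map Prod.snd).Nodup := by simpa using hnd
    have hnd' := List.nodup_cons.mp hnd0
    have hrec : seqAlloc P (a :: L'.map Prod.fst) S =
        (a, favorite (P a) S hS') :: seqAlloc P (L'.map Prod.fst) (S.erase (favorite (P a) S hS')) := by
      rw [seqAlloc, dif_pos hS']
    have hErase : S.erase o = (L'.map Prod.snd).toFinset := by
      rw [← hS]
      ext z
      simp only [Finset.mem_erase, List.mem_toFinset, List.map_cons, List.mem_cons]
      constructor
      · rintro ⟨hne, h | h⟩
        · exact absurd h hne
        · exact h
      · intro hz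
        refine ⟨?_, Or.inr hz⟩
        intro he
        exact hnd'.1 (he ▸ hz)
    simp only [List.map_cons]
    rw [hrec, hfav, hErase, ih _ hnd'.2 rfl hpw'.2]

theorem rank_count (Q : LinearOrder ι) (B : Finset ι) (l : List ι)
    (hl : l.Pairwise (fun x y => Q.lt y x)) (hset : l.toFinset = B)
    (u : ℕ) (hu : u < l.length) :
    (B.filter (fun o => Q.lt (l[u]) o)).card = u := by
  letI := Q
  have hnd : l.Nodup := hl.imp (fun h => (ne_of_lt h).symm)
  have hget := List.pairwise_iff_get.mp hl
  have hfe : B.filter (fun o => Q.lt (l[u]) o) = (l.take u).toFinset := by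
    ext o
    simp only [Finset.mem_filter, List.mem_toFinset, ← hset]
    constructor
    · rintro ⟨ho, hlt⟩
      obtain ⟨v, hv, hvo⟩ := List.mem_iff_getElem.mp ho
      have hvu : v < u := by
        by_contra hge
        push_neg at hge
        rcases Nat.eq_or_lt_of_le hge with he | hlt2
        · subst he; rw [hvo] at hlt; exact lt_irrefl _ hlt
        · have := hget ⟨u, hu⟩ ⟨v, hv⟩ hlt2
          simp only [List.get_eq_getElem] at this
          rw [hvo] at this
          exact absurd hlt (not_lt_of_gt this)
      apply List.mem_iff_getElem.mpr
      exact ⟨v, by rw [List.length_take]; omega, by rw [List.getElem_take]; exact hvo⟩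
    · intro ho
      obtain ⟨v, hv, hvo⟩ := List.mem_iff_getElem.mp ho
      have hvt : v < u ∧ v < l.length := by
        have h1 := hv
        simp only [List.length_take] at h1
        omega
      rw [List.getElem_take] at hvo
      refine ⟨hvo ▸ List.getElem_mem hvt.2, ?_⟩
      have := hget ⟨v, hvt.2⟩ ⟨u, hu⟩ (by simp [Fin.lt_def]; omega)
      simp only [List.get_eq_getElem] at this
      rw [hvo] at this
      exact this
  rw [hfe, List.toFinset_card_of_nodup (hnd.sublist (List.take_sublist u l))]
  simp only [List.length_take]
  omega

theorem rank_unique (Q : LinearOrder ι) [Fintype ι] (B : Finset ι) (o1 o2 : ι)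
    (h1 : o1 ∈ B) (h2 : o2 ∈ B)
    (hc : (B.filter (fun o => Q.lt o1 o)).card = (B.filter (fun o => Q.lt o2 o)).card) :
    o1 = o2 := by
  letI := Q
  rcases lt_trichotomy o1 o2 with h | h | h
  · exfalso
    have hss : B.filter (fun o => Q.lt o2 o) ⊂ B.filter (fun o => Q.lt o1 o) := by
      constructor
      · intro z hz
        simp only [Finset.mem_filter] at hz ⊢
        exact ⟨hz.1, lt_trans h hz.2⟩
      · intro hsub
        have : o2 ∈ B.filter (fun o => Q.lt o1 o) := Finset.mem_filter.mpr ⟨h2, h⟩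
        have := Finset.mem_filter.mp (hsub this)
        exact lt_irrefl _ this.2
    exact absurd hc (Nat.ne_of_gt (Finset.card_lt_card hss))
  · exact h
  · exfalso
    have hss : B.filter (fun o => Q.lt o1 o) ⊂ B.filter (fun o => Q.lt o2 o) := by
      constructor
      · intro z hz
        simp only [Finset.mem_filter] at hz ⊢
        exact ⟨hz.1, lt_trans h hz.2⟩
      · intro hsub
        have : o1 ∈ B.filter (fun o => Q.lt o2 o) := Finset.mem_filter.mpr ⟨h1, h⟩
        have := Finset.mem_filter.mp (hsub this)
        exact lt_irrefl _ this.2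
    exact absurd hc (Nat.ne_of_lt (Finset.card_lt_card hss))

theorem arith_lt {a b d e n : ℕ} (hab : a < b) (hd : d < n) : a * n + d < b * n + e := by
  have h1 : a * n + d < (a + 1) * n := by
    rw [Nat.add_mul, Nat.one_mul]
    omega
  have h2 : (a + 1) * n ≤ b * n := Nat.mul_le_mul_right n hab
  omega

theorem len_flat_rep {α : Type*} (k : ℕ) (σ : List α) :
    (List.replicate k σ).flatten.length = k * σ.length := by
  rw [List.length_flatten, List.map_replicate, List.sum_replicate, smul_eq_mul]

theorem rep_getElem {α : Type*} (σ : List α) (hn : 0 < σ.length) :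
    ∀ (k q : ℕ) (h : q < (List.replicate k σ).flatten.length),
      (List.replicate k σ).flatten[q] = σ[q % σ.length]'(Nat.mod_lt _ hn) := by
  intro k
  induction k with
  | zero => intro q h; rw [len_flat_rep] at h; omega
  | succ k ih =>
    intro q h
    have hdec : (List.replicate (k+1) σ).flatten = σ ++ (List.replicate k σ).flatten := by
      rw [List.replicate_succ, List.flatten_cons]
    rcases Nat.lt_or_ge q σ.length with hq | hq
    · simp only [hdec]
      rw [List.getElem_append_left hq]
      congr 1
      exact (Nat.mod_eq_of_lt hq).symm
    · have hlen : q - σ.length < (List.replicate k σ).flatten.length := by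
        rw [len_flat_rep] at h ⊢
        have : (k+1) * σ.length = k * σ.length + σ.length := by ring
        omega
      have hmod : (q - σ.length) % σ.length = q % σ.length := by
        conv_rhs => rw [Nat.mod_eq_sub_mod hq]
      simp only [hdec]
      rw [List.getElem_append_right hq, ih (q - σ.length) hlen]
      congr 1

end Infra
theorem getElem_congr_idx' {α : Type*} (l : List α) {i j : ℕ} (h : i = j)
    (hi : i < l.length) (hj : j < l.length) : l[i] = l[j] := by subst h; rfl

theorem rep_getElem' {α : Type*} {σ : List α} {n : ℕ} (hσ : σ.length = n) (hn : 0 < n) (k q : ℕ)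
    (h : q < (List.replicate k σ).flatten.length) (h2 : q % n < σ.length) :
    (List.replicate k σ).flatten[q] = σ[q % n] := by
  subst hσ
  exact rep_getElem σ hn k q h

theorem fst_getElem {n : ℕ} {ι : Type} (L : List (Fin n × ι)) (π : List (Fin n))
    (hfst : L.map Prod.fst = π) (q : ℕ) (hq : q < L.length) (hq' : q < π.length) :
    L[q].1 = π[q] := by
  subst hfst
  exact (List.getElem_map _).symm
theorem forward_dir
    {ι : Type} [Fintype ι] [DecidableEq ι] {n k : ℕ} (hn : 0 < n) (hk : 1 ≤ k)
    (hcard : Fintype.card ι = k * n)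
    (P : Fin n → LinearOrder ι) (M : ι → Fin n) (x0 : ι)
    (π : List (Fin n)) (σ : List (Fin n)) (hσlen : σ.length = n)
    (hσcount : ∀ a : Fin n, σ.count a = 1) (hπ : π = (List.replicate k σ).flatten)
    (hout : IsOutcome P π M) :
    ParetoOptimal P M ∧ BalancedAlloc k M ∧
      ∀ p : Fin n → ℕ → ι, IsRankingOf P k M p →
        Cond3 P k p ∧ ∀ a : Fin n, ¬ Relation.TransGen (HM P k p) a a := by
  classical
  have hσnd : σ.Nodup := List.nodup_iff_count_le_one.mpr (fun a => le_of_eq (hσcount a))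
  have hσmem : ∀ a : Fin n, a ∈ σ := fun a =>
    List.count_pos_iff.mp (by rw [hσcount a]; norm_num)
  have hπlen : π.length = k * n := by rw [hπ, len_flat_rep, hσlen]
  set L := seqAlloc P π Finset.univ with hLdef
  obtain ⟨hfst, hnd, hsub, hpw⟩ := seqAlloc_spec P π Finset.univ
    (by rw [hπlen, Finset.card_univ, hcard])
  have hLlen : L.length = k * n := by
    rw [← List.length_map (as := L) Prod.fst, hfst, hπlen]
  have hgetpw := List.pairwise_iff_get.mp hpw
  have hltq : ∀ (q q' : ℕ) (hq : q < L.length) (hq' : q' < L.length), q < q' →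
      (P ((L[q]).1)).lt ((L[q']).2) ((L[q]).2) := by
    intro q q' hq hq' h
    have := hgetpw ⟨q, hq⟩ ⟨q', hq'⟩ (by exact Fin.mk_lt_mk.mpr h)
    simpa using this
  have hndP : L.Pairwise (fun x y => x.2 ≠ y.2) := List.pairwise_map.mp hnd
  have hndget := List.pairwise_iff_get.mp hndP
  have hsndne : ∀ (q q' : ℕ) (hq : q < L.length) (hq' : q' < L.length), q ≠ q' →
      (L[q]).2 ≠ (L[q']).2 := by
    intro q q' hq hq' hne
    rcases Nat.lt_or_ge q q' with h | h
    · have := hndget ⟨q, hq⟩ ⟨q', hq'⟩ (by exact Fin.mk_lt_mk.mpr h); simpa using this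
    · have := hndget ⟨q', hq'⟩ ⟨q, hq⟩ (by exact Fin.mk_lt_mk.mpr (by omega))
      simp only [List.get_eq_getElem] at this
      exact this.symm
  have hMeq : ∀ x ∈ L, M x.2 = x.1 := by
    intro x hx
    have hMx := hout x.2
    by_contra hne
    have hxy : x ≠ (M x.2, x.2) := by
      intro he; apply hne; rw [he]
    exact (haveI : Std.Symm (fun x y : Fin n × ι => x.2 ≠ y.2) := ⟨fun a b h => Ne.symm h⟩
      List.Pairwise.forall hndP hx hMx hxy) rfl
  have hπq : ∀ (q : ℕ) (hq : q < π.length) (h2 : q % n < σ.length), π[q] = σ[q % n] := by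
    intro q hq h2
    subst hπ
    exact rep_getElem' hσlen hn k q hq h2
  have hmodn : ∀ q : ℕ, q % n < σ.length := by
    intro q; rw [hσlen]; exact Nat.mod_lt _ hn
  have hfstq : ∀ (q : ℕ) (hq : q < L.length), (L[q]).1 = σ[q % n]'(hmodn q) := by
    intro q hq
    rw [fst_getElem L π hfst q hq (by omega), hπq q (by omega) (hmodn q)]
  -- the entry at position r*n + indexOf j belongs to agent j
  have hidxlt : ∀ j : Fin n, σ.idxOf j < n := by
    intro j
    have := List.idxOf_lt_length_iff.mpr (hσmem j)
    omega
  have hposlt : ∀ (j : Fin n) (r : ℕ), r < k → r * n + σ.idxOf j < L.length := by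
    intro j r hr
    rw [hLlen]
    have := @arith_lt r k (σ.idxOf j) 0 n hr (hidxlt j)
    omega
  have hfstj : ∀ (j : Fin n) (r : ℕ) (hr : r < k) (hq : r * n + σ.idxOf j < L.length),
      (L[r * n + σ.idxOf j]).1 = j := by
    intro j r hr hq
    rw [hfstq _ hq]
    have hmod : (r * n + σ.idxOf j) % n = σ.idxOf j := by
      rw [Nat.mul_comm r n, Nat.mul_add_mod]
      exact Nat.mod_eq_of_lt (hidxlt j)
    rw [getElem_congr_idx' σ hmod (hmodn _) (by rw [hσlen]; exact hidxlt j)]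
    exact List.getElem_idxOf _
  have hper : ∀ j : Fin n, ∃ ol : List ι,
      ol.length = k ∧ ol.Pairwise (fun x y => (P j).lt y x) ∧
      (∀ o ∈ ol, M o = j) ∧
      ∀ (r : ℕ) (hr : r < k) (hL : r * n + σ.idxOf j < L.length),
        ol.getD r x0 = (L[r * n + σ.idxOf j]).2 := by
    intro j
    refine ⟨(List.range k).map (fun r => (L.getD (r * n + σ.idxOf j) (j, x0)).2), ?_, ?_, ?_, ?_⟩
    · simp
    · rw [List.pairwise_map]
      refine (List.pairwise_lt_range (n := k)).imp_of_mem ?_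
      intro a b ha hb hab
      rw [List.mem_range] at ha hb
      have hua := hposlt j a ha
      have hub := hposlt j b hb
      rw [List.getD_eq_getElem _ _ hua, List.getD_eq_getElem _ _ hub]
      have := hltq _ _ hua hub (arith_lt hab (hidxlt j))
      rwa [hfstj j a ha hua] at this
    · intro o ho
      obtain ⟨r, hr, hro⟩ := List.mem_map.mp ho
      rw [List.mem_range] at hr
      have hu := hposlt j r hr
      rw [List.getD_eq_getElem _ _ hu] at hro
      rw [← hro, hMeq _ (List.getElem_mem hu), hfstj j r hr hu]
    · intro r hr hL
      rw [List.getD_eq_getElem _ _ (by simpa using hr), List.getElem_map, List.getElem_range,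
        List.getD_eq_getElem _ _ hL]
  have holnd : ∀ (j : Fin n) (ol : List ι), ol.Pairwise (fun x y => (P j).lt y x) → ol.Nodup := by
    intro j ol h
    refine h.imp ?_
    intro a b hab
    letI := P j
    exact ne_of_gt hab
  have hsurjpos : ∀ o : ι, ∃ q : ℕ, ∃ hq : q < L.length, (L[q]).2 = o := by
    intro o
    have hto : (L.map Prod.snd).toFinset = Finset.univ :=
      Finset.eq_of_subset_of_card_le (Finset.subset_univ _)
        (by rw [Finset.card_univ, hcard, List.toFinset_card_of_nodup hnd,
            List.length_map, hLlen])
    have hmem : o ∈ L.map Prod.snd := by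
      rw [← List.mem_toFinset, hto]; exact Finset.mem_univ o
    obtain ⟨q, hq, hqe⟩ := List.mem_iff_getElem.mp hmem
    rw [List.getElem_map] at hqe
    exact ⟨q, by simpa using hq, hqe⟩
  have hbfin : ∀ (j : Fin n) (ol : List ι), ol.length = k →
      (∀ o ∈ ol, M o = j) →
      (∀ (r : ℕ) (hr : r < k) (hL : r * n + σ.idxOf j < L.length),
        ol.getD r x0 = (L[r * n + σ.idxOf j]).2) →
      ol.toFinset = Finset.univ.filter (fun o => M o = j) := by
    intro j ol hlen hmemo holget
    apply Finset.Subset.antisymm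
    · intro o ho
      exact Finset.mem_filter.mpr ⟨Finset.mem_univ _, hmemo o (List.mem_toFinset.mp ho)⟩
    · intro o ho
      have hMo : M o = j := (Finset.mem_filter.mp ho).2
      obtain ⟨q, hq, hqe⟩ := hsurjpos o
      have hfq : (L[q]).1 = j := by
        have h5 := hMeq _ (List.getElem_mem hq)
        rw [hqe] at h5
        rw [← h5]; exact hMo
      have hq1 : σ[q % n]'(hmodn q) = j := by rw [← hfstq q hq, hfq]
      have hidx : σ.idxOf j = q % n := by
        have h1 : σ[σ.idxOf j]'(by have := hidxlt j; omega) = j := List.getElem_idxOf _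
        exact (hσnd.getElem_inj_iff).mp (h1.trans hq1.symm)
      have hq2 : q / n * n + σ.idxOf j = q := by
        rw [hidx, Nat.mul_comm]
        exact Nat.div_add_mod q n
      have hrk : q / n < k := (Nat.div_lt_iff_lt_mul hn).mpr (by rw [hLlen] at hq; exact hq)
      have hol := holget (q / n) hrk (by rw [hq2]; exact hq)
      have hL2 : (L[q / n * n + σ.idxOf j]'(by rw [hq2]; exact hq)).2 = o := by
        rw [getElem_congr_idx' L hq2 (by rw [hq2]; exact hq) hq, hqe]
      rw [hL2] at hol
      rw [List.mem_toFinset, ← hol]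
      rw [List.getD_eq_getElem ol x0 (by omega)]
      exact List.getElem_mem (by omega)
  have hbal : BalancedAlloc k M := by
    intro j
    obtain ⟨ol, hlen, hpwo, hmemo, holget⟩ := hper j
    rw [← hbfin j ol hlen hmemo holget,
      List.toFinset_card_of_nodup (holnd j ol hpwo), hlen]
  have hK2 : ∀ (p : Fin n → ℕ → ι), IsRankingOf P k M p → ∀ (j : Fin n) (i : ℕ),
      1 ≤ i → i ≤ k → ∀ (hL : (i - 1) * n + σ.idxOf j < L.length),
      p j i = (L[(i - 1) * n + σ.idxOf j]).2 := by
    intro p hp j i h1 h2 hL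
    obtain ⟨ol, hlen, hpwo, hmemo, holget⟩ := hper j
    have hndo := holnd j ol hpwo
    have hsubf : ol.toFinset ⊆ Finset.univ.filter (fun o => M o = j) := by
      intro o ho
      exact Finset.mem_filter.mpr ⟨Finset.mem_univ _, hmemo o (List.mem_toFinset.mp ho)⟩
    have htofin : ol.toFinset = Finset.univ.filter (fun o => M o = j) :=
      Finset.eq_of_subset_of_card_le hsubf
        (by rw [hbal j, List.toFinset_card_of_nodup hndo, hlen])
    have hi1 : i - 1 < ol.length := by omega
    have hcnt := rank_count (P j) _ ol hpwo htofin (i - 1) hi1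
    obtain ⟨hpmem, hpcnt⟩ := hp j i h1 h2
    have hfilter : ∀ z : ι,
        Finset.univ.filter (fun o => M o = j ∧ (P j).lt z o) =
          (Finset.univ.filter (fun o => M o = j)).filter (fun o => (P j).lt z o) := by
      intro z; rw [Finset.filter_filter]
    have heq := rank_unique (P j) (Finset.univ.filter (fun o => M o = j)) (p j i)
      (ol[i - 1]) (Finset.mem_filter.mpr ⟨Finset.mem_univ _, hpmem⟩)
      (by rw [← htofin]; exact List.mem_toFinset.mpr (List.getElem_mem hi1))
      (by rw [← hfilter, hpcnt, hcnt])
    rw [heq, ← holget (i - 1) (by omega) hL, List.getD_eq_getElem _ _ hi1]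
  refine ⟨?_, hbal, ?_⟩
  · rintro ⟨f, hfle, o0, hflt⟩
    have hfix : ∀ q : ℕ, ∀ hq : q < L.length, f ((L[q]).2) = (L[q]).2 := by
      intro q
      induction q using Nat.strong_induction_on with
      | _ q ih =>
        intro hq
        obtain ⟨q', hq', hq'e⟩ := hsurjpos (f ((L[q]).2))
        rcases lt_trichotomy q' q with h | h | h
        · exfalso
          have h1 : f ((L[q']).2) = (L[q']).2 := ih q' h hq'
          have h2 : (L[q']).2 = (L[q]).2 := f.injective (by rw [h1, hq'e])
          exact hsndne q' q hq' hq (by omega) h2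
        · subst h
          exact hq'e.symm
        · exfalso
          have hlt2 := hltq q q' hq hq' h
          rw [hq'e] at hlt2
          have hMq : (L[q]).1 = M ((L[q]).2) := (hMeq _ (List.getElem_mem hq)).symm
          rw [hMq] at hlt2
          have hle2 := hfle ((L[q]).2)
          letI := P (M ((L[q]).2))
          exact absurd hle2 (not_le_of_gt hlt2)
    obtain ⟨q, hq, hqo⟩ := hsurjpos o0
    have hfo := hfix q hq
    rw [hqo] at hfo
    rw [hfo] at hflt
    letI := P (M o0)
    exact lt_irrefl _ hflt
  · intro p hp
    constructor
    · intro t s h1t hts hsk j j'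
      have hu : (t - 1) * n + σ.idxOf j < L.length := hposlt j (t - 1) (by omega)
      have hv : (s - 1) * n + σ.idxOf j' < L.length := hposlt j' (s - 1) (by omega)
      have huv : (t - 1) * n + σ.idxOf j < (s - 1) * n + σ.idxOf j' :=
        arith_lt (by omega) (hidxlt j)
      have hrel := hltq _ _ hu hv huv
      rw [hfstj j (t - 1) (by omega) hu] at hrel
      rw [hK2 p hp j t h1t (by omega) hu, hK2 p hp j' s (by omega) hsk hv]
      exact hrel
    · intro a hcyc
      have hsub2 : ∀ x y : Fin n, HM P k p x y → σ.idxOf x < σ.idxOf y := by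
        rintro x y ⟨i, hi1, hik, hlt⟩
        have hu : (i - 1) * n + σ.idxOf x < L.length := hposlt x (i - 1) (by omega)
        have hv : (i - 1) * n + σ.idxOf y < L.length := hposlt y (i - 1) (by omega)
        have hpx : p x i = (L[(i - 1) * n + σ.idxOf x]).2 := hK2 p hp x i hi1 hik hu
        have hpy : p y i = (L[(i - 1) * n + σ.idxOf y]).2 := hK2 p hp y i hi1 hik hv
        rcases lt_trichotomy (σ.idxOf x) (σ.idxOf y) with h | h | h
        · exact h
        · exfalso
          have hxy : x = y := by
            have h1 : σ[σ.idxOf x]'(by rw [hσlen]; exact hidxlt x) = x :=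
              List.getElem_idxOf _
            have h2 : σ[σ.idxOf y]'(by rw [hσlen]; exact hidxlt y) = y :=
              List.getElem_idxOf _
            rw [← h1, ← h2]
            exact getElem_congr_idx' σ h _ _
          subst hxy
          letI := P x
          exact lt_irrefl _ hlt
        · exfalso
          have hrel := hltq _ _ hv hu (by omega)
          rw [hfstj y (i - 1) (by omega) hv] at hrel
          rw [← hpx, ← hpy] at hrel
          letI := P y
          exact absurd hrel (not_lt_of_gt hlt)
      have htr : Transitive (fun x y : Fin n => σ.idxOf x < σ.idxOf y) :=
        fun _ _ _ h1 h2 => h1.trans h2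
      have htg : Relation.TransGen (fun x y : Fin n => σ.idxOf x < σ.idxOf y) a a :=
        Relation.TransGen.mono (fun x y h => hsub2 x y h) a a hcyc
      haveI : IsTrans (Fin n) (fun x y : Fin n => σ.idxOf x < σ.idxOf y) := ⟨fun a b c => @htr a b c⟩
      rw [Relation.transGen_eq_self] at htg
      omega
theorem backward_dir
    {ι : Type} [Fintype ι] [DecidableEq ι] {n k : ℕ} (hn : 0 < n) (hk : 1 ≤ k)
    (hcard : Fintype.card ι = k * n)
    (P : Fin n → LinearOrder ι) (M : ι → Fin n) (x0 : ι)
    (hbal : BalancedAlloc k M)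
    (hp3 : ∀ p : Fin n → ℕ → ι, IsRankingOf P k M p →
      Cond3 P k p ∧ ∀ a : Fin n, ¬ Relation.TransGen (HM P k p) a a) :
    ∃ π : List (Fin n), StrictAlt n k π ∧ IsOutcome P π M := by
  classical
  set sl : Fin n → List ι := fun j =>
    ((Finset.univ.filter (fun o => M o = j)).toList.insertionSort
      (fun x y => (P j).le x y)).reverse with hsl
  set p : Fin n → ℕ → ι := fun j i => (sl j).getD (i - 1) x0 with hpdef
  have hslkey : ∀ j : Fin n, (sl j).length = k ∧ (sl j).Pairwise (fun x y => (P j).lt y x) ∧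
      (sl j).toFinset = Finset.univ.filter (fun o => M o = j) := by
    intro j
    letI := P j
    haveI htot : IsTotal ι (fun x y => (P j).le x y) := ⟨fun a b => le_total a b⟩
    haveI htrans : IsTrans ι (fun x y => (P j).le x y) := ⟨fun a b c h1 h2 => le_trans h1 h2⟩
    have hperm := List.perm_insertionSort (fun x y => (P j).le x y)
      (Finset.univ.filter (fun o => M o = j)).toList
    have hnodup := hperm.nodup_iff.mpr (Finset.nodup_toList _)
    have hsorted := List.pairwise_insertionSort (fun x y => (P j).le x y)
      (Finset.univ.filter (fun o => M o = j)).toList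
    refine ⟨?_, ?_, ?_⟩
    · simp only [hsl]
      rw [List.length_reverse, List.length_insertionSort, Finset.length_toList]
      exact hbal j
    · simp only [hsl]
      rw [List.pairwise_reverse]
      have hpw2 : List.Pairwise (fun x y => (P j).lt x y)
          ((Finset.univ.filter (fun o => M o = j)).toList.insertionSort
            (fun x y => (P j).le x y)) := by
        refine (List.Pairwise.and hsorted hnodup).imp ?_
        rintro a b ⟨hle, hne⟩
        exact lt_of_le_of_ne hle hne
      exact hpw2.imp (fun h => h)
    · simp only [hsl]
      rw [List.toFinset_reverse]
      ext o
      rw [List.mem_toFinset, List.mem_insertionSort, Finset.mem_toList]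
  have hsllen : ∀ j, (sl j).length = k := fun j => (hslkey j).1
  have hslpw : ∀ j, (sl j).Pairwise (fun x y => (P j).lt y x) := fun j => (hslkey j).2.1
  have hsltf : ∀ j, (sl j).toFinset = Finset.univ.filter (fun o => M o = j) :=
    fun j => (hslkey j).2.2
  have hrank : IsRankingOf P k M p := by
    intro j i h1 h2
    have hi1 : i - 1 < (sl j).length := by rw [hsllen j]; omega
    have hget : p j i = (sl j)[i - 1] := List.getD_eq_getElem _ _ hi1
    have hM : M (p j i) = j := by
      rw [hget]
      have hmemb := List.mem_toFinset.mpr (List.getElem_mem hi1)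
      rw [hsltf j] at hmemb
      exact (Finset.mem_filter.mp hmemb).2
    refine ⟨hM, ?_⟩
    rw [show (Finset.univ.filter (fun o => M o = j ∧ (P j).lt (p j i) o)) =
        ((Finset.univ.filter (fun o => M o = j)).filter (fun o => (P j).lt (p j i) o)) from by
      rw [Finset.filter_filter]]
    rw [hget]
    exact rank_count (P j) _ (sl j) (hslpw j) (hsltf j) (i - 1) hi1
  have hpsurj : ∀ o : ι, ∃ i, 1 ≤ i ∧ i ≤ k ∧ p (M o) i = o := by
    intro o
    have hmem : o ∈ sl (M o) := by
      rw [← List.mem_toFinset, hsltf]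
      exact Finset.mem_filter.mpr ⟨Finset.mem_univ _, rfl⟩
    obtain ⟨v, hv, hvo⟩ := List.mem_iff_getElem.mp hmem
    refine ⟨v + 1, by omega, by rw [hsllen] at hv; omega, ?_⟩
    show (sl (M o)).getD (v + 1 - 1) x0 = o
    rw [Nat.add_sub_cancel, List.getD_eq_getElem _ _ hv]
    exact hvo
  obtain ⟨hc3, hacyc⟩ := hp3 p hrank
  set g : Fin n → ℕ :=
    fun a => (Finset.univ.filter (fun b => Relation.TransGen (HM P k p) b a)).card with hg
  have hmono : ∀ a b : Fin n, HM P k p a b → g a < g b := by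
    intro a b hab
    apply Finset.card_lt_card
    constructor
    · intro c hc
      simp only [Finset.mem_filter] at hc ⊢
      exact ⟨hc.1, hc.2.tail hab⟩
    · intro hsub
      have ha : a ∈ Finset.univ.filter (fun c => Relation.TransGen (HM P k p) c b) :=
        Finset.mem_filter.mpr ⟨Finset.mem_univ _, Relation.TransGen.single hab⟩
      have := hsub ha
      exact hacyc a (Finset.mem_filter.mp this).2
  set r : Fin n → Fin n → Prop := fun a b => g a < g b ∨ (g a = g b ∧ a ≤ b) with hr
  haveI hdecr : DecidableRel r := fun a b => Classical.propDecidable _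
  haveI : IsTotal (Fin n) r := ⟨by
    intro a b
    simp only [hr]
    rcases lt_trichotomy (g a) (g b) with h | h | h
    · exact Or.inl (Or.inl h)
    · rcases le_total a b with h2 | h2
      · exact Or.inl (Or.inr ⟨h, h2⟩)
      · exact Or.inr (Or.inr ⟨h.symm, h2⟩)
    · exact Or.inr (Or.inl h)⟩
  haveI : IsTrans (Fin n) r := ⟨by
    intro a b c h1 h2
    simp only [hr] at h1 h2 ⊢
    rcases h1 with h1 | ⟨h1, h1'⟩ <;> rcases h2 with h2 | ⟨h2, h2'⟩
    · exact Or.inl (h1.trans h2)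
    · exact Or.inl (by omega)
    · exact Or.inl (by omega)
    · exact Or.inr ⟨h1.trans h2, le_trans h1' h2'⟩⟩
  set σ : List (Fin n) := (List.finRange n).insertionSort r with hσ
  have hσsorted : σ.Pairwise r := List.pairwise_insertionSort r _
  have hσperm : σ.Perm (List.finRange n) := List.perm_insertionSort r _
  have hσnd : σ.Nodup := hσperm.nodup_iff.mpr (List.nodup_finRange n)
  have hσmem : ∀ a : Fin n, a ∈ σ := fun a => (hσperm.mem_iff).mpr (List.mem_finRange a)
  have hσlen : σ.length = n := by rw [hσperm.length_eq, List.length_finRange]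
  have hσcount : ∀ a : Fin n, σ.count a = 1 := by
    intro a
    have h1 := List.nodup_iff_count_le_one.mp hσnd a
    have h2 := List.count_pos_iff.mpr (hσmem a)
    omega
  have hσpw : σ.Pairwise (fun a b => r a b ∧ a ≠ b) := List.Pairwise.and hσsorted hσnd
  have hround : ∀ i, 1 ≤ i → i ≤ k →
      σ.Pairwise (fun a b => (P a).lt (p b i) (p a i)) := by
    intro i h1 h2
    refine hσpw.imp ?_
    rintro a b ⟨hrab, hne⟩
    have hMa : M (p a i) = a := (hrank a i h1 h2).1
    have hMb : M (p b i) = b := (hrank b i h1 h2).1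
    have hpne : p a i ≠ p b i := fun he => hne (by rw [← hMa, he, hMb])
    by_contra hcon
    letI := P a
    have hlt2 : (P a).lt (p a i) (p b i) := lt_of_le_of_ne (not_lt.mp hcon) hpne
    have hHM : HM P k p b a := ⟨i, h1, h2, hlt2⟩
    have hgba := hmono b a hHM
    simp only [hr] at hrab
    rcases hrab with h | ⟨h, _⟩ <;> omega
  set LL : List (List (Fin n × ι)) :=
    (List.range k).map (fun t => σ.map (fun j => (j, p j (t + 1)))) with hLL
  set L : List (Fin n × ι) := LL.flatten with hL
  have hLfst : L.map Prod.fst = (List.replicate k σ).flatten := by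
    rw [hL, List.map_flatten, hLL, List.map_map]
    congr 1
    have he : (List.map Prod.fst ∘ fun t => σ.map fun j => (j, p j (t + 1))) =
        fun _ : ℕ => σ := by
      funext t
      simp [Function.comp_def]
    rw [he, List.map_const', List.length_range]
  have hLlen : L.length = k * n := by
    rw [hL, List.length_flatten, hLL, List.map_map]
    have he : (List.length ∘ fun t => σ.map fun j => (j, p j (t + 1))) = fun _ : ℕ => n := by
      funext t
      simp [hσlen]
    rw [he, List.map_const', List.length_range, List.sum_replicate, smul_eq_mul]
  have hLmemo : ∀ o : ι, (M o, o) ∈ L := by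
    intro o
    obtain ⟨i, h1, h2, hpo⟩ := hpsurj o
    rw [hL, List.mem_flatten]
    refine ⟨σ.map (fun j => (j, p j ((i - 1) + 1))), ?_, ?_⟩
    · rw [hLL]
      exact List.mem_map.mpr ⟨i - 1, List.mem_range.mpr (by omega), rfl⟩
    · refine List.mem_map.mpr ⟨M o, hσmem (M o), ?_⟩
      rw [show i - 1 + 1 = i from by omega, hpo]
  have hto : (L.map Prod.snd).toFinset = Finset.univ := by
    apply Finset.eq_univ_iff_forall.mpr
    intro o
    rw [List.mem_toFinset]
    exact List.mem_map.mpr ⟨(M o, o), hLmemo o, rfl⟩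
  have hndsnd : (L.map Prod.snd).Nodup := by
    have hlen2 : (L.map Prod.snd).length = k * n := by rw [List.length_map, hLlen]
    have hcard2 : (L.map Prod.snd).toFinset.card = k * n := by
      rw [hto, Finset.card_univ, hcard]
    rw [List.card_toFinset] at hcard2
    have hsb := List.dedup_sublist (L.map Prod.snd)
    have heq := List.Sublist.eq_of_length hsb (by omega)
    rw [← heq]
    exact List.nodup_dedup _
  have hpwL : L.Pairwise (fun x y => (P x.1).lt y.2 x.2) := by
    rw [hL, List.pairwise_flatten]
    constructor
    · intro l hl
      rw [hLL] at hl
      obtain ⟨t, ht, rfl⟩ := List.mem_map.mp hl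
      rw [List.mem_range] at ht
      rw [List.pairwise_map]
      exact hround (t + 1) (by omega) (by omega)
    · rw [hLL, List.pairwise_map]
      refine (List.pairwise_lt_range (n := k)).imp_of_mem ?_
      intro t t' ht ht' hlt x hx y hy
      rw [List.mem_range] at ht ht'
      obtain ⟨a, ha, rfl⟩ := List.mem_map.mp hx
      obtain ⟨b, hb, rfl⟩ := List.mem_map.mp hy
      exact hc3 (t + 1) (t' + 1) (by omega) (by omega) (by omega) a b
  have hseq := seqAlloc_eq P L Finset.univ hndsnd hto hpwL
  rw [hLfst] at hseq
  refine ⟨(List.replicate k σ).flatten, ⟨σ, hσlen, hσcount, rfl⟩, ?_⟩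
  intro o
  rw [hseq]
  exact hLmemo o
/-- An allocation `M` is the outcome of some strict alternation policy if
and only if `M` is Pareto optimal, balanced, satisfies Condition 3, and the directed
graph `H_M` contains no cycle. -/
theorem possible_assignment_strict_alternation
    {ι : Type} [Fintype ι] [DecidableEq ι] {n k : ℕ} (hn : 0 < n) (hk : 1 ≤ k)
    (hcard : Fintype.card ι = k * n)
    (P : Fin n → LinearOrder ι) (M : ι → Fin n) :
    (∃ π : List (Fin n), StrictAlt n k π ∧ IsOutcome P π M) ↔
      ParetoOptimal P M ∧ BalancedAlloc k M ∧
        ∀ p : Fin n → ℕ → ι, IsRankingOf P k M p →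
          Cond3 P k p ∧ ∀ a : Fin n, ¬ Relation.TransGen (HM P k p) a a := by
  classical
  have hpos : 0 < Fintype.card ι := by rw [hcard]; exact Nat.mul_pos hk hn
  obtain ⟨x0⟩ := Fintype.card_pos_iff.mp hpos
  constructor
  · rintro ⟨π, ⟨σ, h1, h2, h3⟩, hout⟩
    exact forward_dir hn hk hcard P M x0 π σ h1 h2 h3 hout
  · rintro ⟨_hPO, hbal, hp3⟩
    exact backward_dir hn hk hcard P M x0 hbal hp3
end
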